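/- Let (R,q) be a nondegenerate quadratic space over F_2. Let S_1 be a totally singular subspace, S_2 ⊆ S_1 totally singular, P a nondegenerate subspace of S_1^⊥, Q a complement of S_1 in (S_1 ⊥ P)^⊥, T a complement of S_2 in (S_2 ⊥ P)^⊥, and φ : T → Q^⊥ an isomorphism of quadratic spaces. Then S := {(s_1+p+q, s_2+p+t, q+φ(t)) : s_i ∈ S_i, p ∈ P, q ∈ Q, t ∈ T} is a totally singular subspace of (R^3, q^3), where q^3(v_1,v_2,v_3) = q(v_1)+q(v_2)+q(v_3). -/
import Mathlib


/-- Theorem 4.6(2) of Lam–Shimakura: given a nondegenerate quadratic space `(R,q)` over `F₂`,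
totally singular subspaces `S₂ ⊆ S₁`, a nondegenerate subspace `P ⊆ S₁^⊥`, complements `Q`
of `S₁` in `(S₁ ⊥ P)^⊥` and `T` of `S₂` in `(S₂ ⊥ P)^⊥`, and an isomorphism `φ : T → Q^⊥` of
quadratic spaces, the set
`S = {(s₁+p+q, s₂+p+t, q+φ(t))}` is a totally singular subspace of `(R³, q³)`. -/
theorem totally_singular_S {R : Type*} [AddCommGroup R] [Module (ZMod 2) R]
    (q : QuadraticForm (ZMod 2) R)
    (hnd : (QuadraticMap.polarBilin q).Nondegenerate)
    (S1 S2 P Q T : Submodule (ZMod 2) R)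
    (hS1 : ∀ x ∈ S1, q x = 0) (hS21 : S2 ≤ S1)
    (hPS1 : P ≤ LinearMap.BilinForm.orthogonal (QuadraticMap.polarBilin q) S1)
    (hPnd : (LinearMap.BilinForm.restrict (QuadraticMap.polarBilin q) P).Nondegenerate)
    (hQ1 : Q ⊓ S1 = ⊥)
    (hQ2 : Q ⊔ S1 = LinearMap.BilinForm.orthogonal (QuadraticMap.polarBilin q) (S1 ⊔ P))
    (hT1 : T ⊓ S2 = ⊥)
    (hT2 : T ⊔ S2 = LinearMap.BilinForm.orthogonal (QuadraticMap.polarBilin q) (S2 ⊔ P))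
    (φ : ↥T ≃ₗ[ZMod 2]
      ↥(LinearMap.BilinForm.orthogonal (QuadraticMap.polarBilin q) Q))
    (hφ : ∀ t : ↥T, q ((φ t : R)) = q (t : R)) :
    ∃ W : Submodule (ZMod 2) (R × R × R),
      (W : Set (R × R × R)) =
        {x | ∃ s1 ∈ S1, ∃ s2 ∈ S2, ∃ p ∈ P, ∃ u ∈ Q, ∃ t : ↥T,
          x = (s1 + p + u, s2 + p + (t : R), u + (φ t : R))} ∧
      ∀ v ∈ W, (QuadraticMap.prod q (QuadraticMap.prod q q)) v = 0 := by
  let f : (↥S1 × ↥S2 × ↥P × ↥Q × ↥T) →ₗ[ZMod 2] R × R × R :=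
    { toFun := fun x => ((x.1 : R) + (x.2.2.1 : R) + (x.2.2.2.1 : R),
        (x.2.1 : R) + (x.2.2.1 : R) + (x.2.2.2.2 : R),
        (x.2.2.2.1 : R) + ((φ x.2.2.2.2 : ↥(LinearMap.BilinForm.orthogonal (QuadraticMap.polarBilin q) Q)) : R))
      map_add' := by
        intro a b
        simp only [Prod.fst_add, Prod.snd_add, Submodule.coe_add, map_add, Prod.mk_add_mk]
        abel_nf
      map_smul' := by
        intro c a
        simp only [Prod.smul_fst, Prod.smul_snd, SetLike.val_smul, map_smul,
          Prod.smul_mk, RingHom.id_apply, smul_add] }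
  refine ⟨LinearMap.range f, ?_, ?_⟩
  · ext x
    simp only [SetLike.mem_coe, LinearMap.mem_range, Set.mem_setOf_eq]
    constructor
    · rintro ⟨⟨s1, s2, p, u, t⟩, rfl⟩
      refine ⟨s1, s1.2, s2, s2.2, p, p.2, u, u.2, t, ?_⟩
      rfl
    · rintro ⟨s1, hs1, s2, hs2, p, hp, u, hu, t, rfl⟩
      refine ⟨⟨⟨s1, hs1⟩, ⟨s2, hs2⟩, ⟨p, hp⟩, ⟨u, hu⟩, t⟩, ?_⟩
      rfl
  · rintro v ⟨⟨⟨s1, hs1⟩, ⟨s2, hs2⟩, ⟨p, hp⟩, ⟨u, hu⟩, t⟩, rfl⟩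
    have hpo : ∀ x ∈ S1, QuadraticMap.polar q x p = 0 := fun x hx => hPS1 hp x hx
    have huo : (u : R) ∈ LinearMap.BilinForm.orthogonal (QuadraticMap.polarBilin q) (S1 ⊔ P) := by
      rw [← hQ2]; exact Submodule.mem_sup_left hu
    have hto : (t : R) ∈ LinearMap.BilinForm.orthogonal (QuadraticMap.polarBilin q) (S2 ⊔ P) := by
      rw [← hT2]; exact Submodule.mem_sup_left t.2
    have h1 : QuadraticMap.polar q s1 u = 0 := huo s1 (Submodule.mem_sup_left hs1)
    have h2 : QuadraticMap.polar q p u = 0 := huo p (Submodule.mem_sup_right hp)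
    have h3 : QuadraticMap.polar q s2 (t : R) = 0 := hto s2 (Submodule.mem_sup_left hs2)
    have h4 : QuadraticMap.polar q p (t : R) = 0 := hto p (Submodule.mem_sup_right hp)
    have h5 : QuadraticMap.polar q u ((φ t : ↥(LinearMap.BilinForm.orthogonal (QuadraticMap.polarBilin q) Q)) : R) = 0 :=
      (φ t).2 u hu
    have e1 : q (s1 + p + u) = q p + q u := by
      rw [QuadraticMap.map_add (⇑q) (s1 + p) u, QuadraticMap.map_add (⇑q) s1 p,
        QuadraticMap.polar_add_left, hS1 s1 hs1, hpo s1 hs1, h1, h2]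
      abel
    have e2 : q (s2 + p + (t : R)) = q p + q (t : R) := by
      rw [QuadraticMap.map_add (⇑q) (s2 + p) (t : R), QuadraticMap.map_add (⇑q) s2 p,
        QuadraticMap.polar_add_left, hS1 s2 (hS21 hs2), hpo s2 (hS21 hs2), h3, h4]
      abel
    have e3 : q ((u : R) + ((φ t : ↥(LinearMap.BilinForm.orthogonal (QuadraticMap.polarBilin q) Q)) : R))
        = q u + q (t : R) := by
      rw [QuadraticMap.map_add (⇑q) u _, h5, hφ t]
      abel
    simp only [QuadraticMap.prod_apply, f, LinearMap.coe_mk, AddHom.coe_mk]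
    rw [e1, e2, e3]
    ring_nf
    simp [show (2 : ZMod 2) = 0 from rfl]
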